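/- arXiv:2602.14503 — 2 statements merged into one kernel-verified Lean document; each statement's English description precedes it below -/
import Mathlib

section
/- Covariate-refined lower bound on PNS (special case of Theorem 1 for a binary model with one non-descendant covariate): for every P as in the context, P(Y₁ = true ∧ Y₀ = false) ≥ Σ_{z ∈ Z} max {0, P(Y₁ = true ∧ Z = z) − P(Y₀ = true ∧ Z = z), P(Y = true ∧ Z = z) − P(Y₀ = true ∧ Z = z), P(Y₁ = true ∧ Z = z) − P(Y = true ∧ Z = z)}. -/
/-- The probability of an event `E` under a mass function `P` on a finite type. -/
noncomputable def prob {Ω : Type*} [Fintype Ω] (P : Ω → ℝ) (E : Set Ω) : ℝ :=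
  ∑ ω, E.indicator P ω

/-- The binary counterfactual sample space with one covariate: coordinates
`(Y₀, Y₁, X, Z)`, i.e. the potential outcomes `Y₀ = Y_{x'}` and `Y₁ = Y_x`, the
treatment `X`, and a non-descendant covariate `Z`. -/
abbrev ZOmega (Z : Type) : Type := Bool × Bool × Bool × Z

/-- The observed outcome defined by consistency: `Y := if X then Y₁ else Y₀`. -/
def Yobs {Z : Type} (ω : ZOmega Z) : Bool := if ω.2.2.1 then ω.2.1 else ω.1

lemma prob_nonneg' {Ω : Type*} [Fintype Ω] (P : Ω → ℝ) (hP0 : ∀ ω, 0 ≤ P ω) (E : Set Ω) :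
    0 ≤ prob P E :=
  Finset.sum_nonneg fun ω _ => Set.indicator_nonneg (fun x _ => hP0 x) ω

lemma prob_sub_le {Ω : Type*} [Fintype Ω] (P : Ω → ℝ) (hP0 : ∀ ω, 0 ≤ P ω)
    (S T U : Set Ω) (h : ∀ ω, ω ∈ S → ω ∈ T ∨ ω ∈ U) :
    prob P S - prob P T ≤ prob P U := by
  rw [sub_le_iff_le_add]
  unfold prob
  rw [← Finset.sum_add_distrib]
  apply Finset.sum_le_sum
  intro ω _
  have hT0 : 0 ≤ T.indicator P ω := Set.indicator_nonneg (fun x _ => hP0 x) ω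
  have hU0 : 0 ≤ U.indicator P ω := Set.indicator_nonneg (fun x _ => hP0 x) ω
  by_cases hS : ω ∈ S
  · rw [Set.indicator_of_mem hS]
    rcases h ω hS with hT | hU
    · rw [Set.indicator_of_mem hT]; linarith
    · rw [Set.indicator_of_mem hU]; linarith
  · rw [Set.indicator_of_notMem hS]; linarith

lemma sum_prob_fiber {Ω Z : Type*} [Fintype Ω] [Fintype Z] [DecidableEq Z]
    (P : Ω → ℝ) (C : Ω → Prop) (f : Ω → Z) :
    ∑ z : Z, prob P {ω | C ω ∧ f ω = z} = prob P {ω | C ω} := by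
  unfold prob
  rw [Finset.sum_comm]
  apply Finset.sum_congr rfl
  intro ω _
  classical
  have : ∀ z : Z, Set.indicator {ω' | C ω' ∧ f ω' = z} P ω
      = if C ω ∧ f ω = z then P ω else 0 := fun z => Set.indicator_apply _ _ _
  simp only [this, Set.indicator_apply, Set.mem_setOf_eq]
  by_cases hC : C ω
  · rw [Finset.sum_eq_single (f ω)]
    · simp [hC]
    · intro z _ hz; simp [hz.symm]
    · simp
  · simp [hC]

/-- Covariate-refined lower bound on PNS: `PNS ≥ Σ_z max {0, P(y_x, z) − P(y_{x'}, z),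
P(y, z) − P(y_{x'}, z), P(y_x, z) − P(y, z)}`. -/
theorem covariate_pns_lower_bound
    (Z : Type) [Fintype Z] [Nonempty Z]
    (P : ZOmega Z → ℝ) (hP0 : ∀ ω, 0 ≤ P ω) (hP1 : ∑ ω, P ω = 1) :
    ∑ z : Z, max 0 (max
        (prob P {ω | ω.2.1 = true ∧ ω.2.2.2 = z} -
          prob P {ω | ω.1 = true ∧ ω.2.2.2 = z})
        (max
          (prob P {ω | Yobs ω = true ∧ ω.2.2.2 = z} -
            prob P {ω | ω.1 = true ∧ ω.2.2.2 = z})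
          (prob P {ω | ω.2.1 = true ∧ ω.2.2.2 = z} -
            prob P {ω | Yobs ω = true ∧ ω.2.2.2 = z}))) ≤
      prob P {ω | ω.2.1 = true ∧ ω.1 = false} := by
  classical
  have key : ∀ z : Z, max 0 (max
        (prob P {ω | ω.2.1 = true ∧ ω.2.2.2 = z} -
          prob P {ω | ω.1 = true ∧ ω.2.2.2 = z})
        (max
          (prob P {ω | Yobs ω = true ∧ ω.2.2.2 = z} -
            prob P {ω | ω.1 = true ∧ ω.2.2.2 = z})
          (prob P {ω | ω.2.1 = true ∧ ω.2.2.2 = z} -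
            prob P {ω | Yobs ω = true ∧ ω.2.2.2 = z})))
      ≤ prob P {ω | (ω.2.1 = true ∧ ω.1 = false) ∧ ω.2.2.2 = z} := by
    intro z
    apply max_le (prob_nonneg' P hP0 _)
    apply max_le
    · apply prob_sub_le P hP0
      rintro ⟨y0, y1, x, zz⟩ ⟨h1, h2⟩
      cases y0 <;> simp_all [Set.mem_setOf_eq]
    · apply max_le
      · apply prob_sub_le P hP0
        rintro ⟨y0, y1, x, zz⟩ ⟨h1, h2⟩
        simp only [Yobs, Set.mem_setOf_eq] at h1 ⊢
        cases y0 <;> cases y1 <;> cases x <;> simp_all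
      · apply prob_sub_le P hP0
        rintro ⟨y0, y1, x, zz⟩ ⟨h1, h2⟩
        simp only [Yobs, Set.mem_setOf_eq] at h1 ⊢
        cases y0 <;> cases y1 <;> cases x <;> simp_all
  calc ∑ z : Z, max 0 (max
        (prob P {ω | ω.2.1 = true ∧ ω.2.2.2 = z} -
          prob P {ω | ω.1 = true ∧ ω.2.2.2 = z})
        (max
          (prob P {ω | Yobs ω = true ∧ ω.2.2.2 = z} -
            prob P {ω | ω.1 = true ∧ ω.2.2.2 = z})
          (prob P {ω | ω.2.1 = true ∧ ω.2.2.2 = z} -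
            prob P {ω | Yobs ω = true ∧ ω.2.2.2 = z})))
      ≤ ∑ z : Z, prob P {ω | (ω.2.1 = true ∧ ω.1 = false) ∧ ω.2.2.2 = z} :=
        Finset.sum_le_sum fun z _ => key z
    _ = prob P {ω | ω.2.1 = true ∧ ω.1 = false} :=
        sum_prob_fiber P (fun ω => ω.2.1 = true ∧ ω.1 = false) (fun ω => ω.2.2.2)
end

section
/- Covariate-refined upper bound on PNS (special case of Theorem 1 for a binary model with one non-descendant covariate): for every P as in the context, P(Y₁ = true ∧ Y₀ = false) ≤ Σ_{z ∈ Z} min {P(Y₁ = true ∧ Z = z), P(Y₀ = false ∧ Z = z), P(X = true ∧ Y = true ∧ Z = z) + P(X = false ∧ Y = false ∧ Z = z), P(Y₁ = true ∧ Z = z) − P(Y₀ = true ∧ Z = z) + P(X = true ∧ Y = false ∧ Z = z) + P(X = false ∧ Y = true ∧ Z = z)}. -/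
section helpers
variable {Ω : Type*} [Fintype Ω] {P : Ω → ℝ}

lemma prob_mono (hP0 : ∀ ω, 0 ≤ P ω) {E F : Set Ω} (h : E ⊆ F) :
    prob P E ≤ prob P F := by
  apply Finset.sum_le_sum
  intro ω _
  exact Set.indicator_le_indicator_of_subset h hP0 ω

lemma prob_union {E F : Set Ω} (h : Disjoint E F) :
    prob P (E ∪ F) = prob P E + prob P F := by
  unfold prob
  rw [← Finset.sum_add_distrib]
  congr 1
  ext ω
  rw [Set.indicator_union_of_disjoint h]

end helpers

lemma prob_split {Z : Type} [Fintype Z] (P : ZOmega Z → ℝ) (p : ZOmega Z → Prop) :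
    prob P {ω | p ω} = ∑ z : Z, prob P {ω | p ω ∧ ω.2.2.2 = z} := by
  classical
  unfold prob
  rw [Finset.sum_comm]
  apply Finset.sum_congr rfl
  intro ω _
  simp only [Set.indicator_apply, Set.mem_setOf_eq]
  by_cases hp : p ω
  · simp [hp, Finset.sum_ite_eq' Finset.univ ω.2.2.2]
  · simp [hp]


/-- Covariate-refined upper bound on PNS: `PNS ≤ Σ_z min {P(y_x, z), P(y'_{x'}, z),
P(x, y, z) + P(x', y', z), P(y_x, z) − P(y_{x'}, z) + P(x, y', z) + P(x', y, z)}`. -/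
theorem covariate_pns_upper_bound
    (Z : Type) [Fintype Z] [Nonempty Z]
    (P : ZOmega Z → ℝ) (hP0 : ∀ ω, 0 ≤ P ω) (hP1 : ∑ ω, P ω = 1) :
    prob P {ω | ω.2.1 = true ∧ ω.1 = false} ≤
      ∑ z : Z, min (prob P {ω | ω.2.1 = true ∧ ω.2.2.2 = z}) (min
        (prob P {ω | ω.1 = false ∧ ω.2.2.2 = z})
        (min
          (prob P {ω | ω.2.2.1 = true ∧ Yobs ω = true ∧ ω.2.2.2 = z} +
            prob P {ω | ω.2.2.1 = false ∧ Yobs ω = false ∧ ω.2.2.2 = z})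
          (prob P {ω | ω.2.1 = true ∧ ω.2.2.2 = z} -
            prob P {ω | ω.1 = true ∧ ω.2.2.2 = z} +
            prob P {ω | ω.2.2.1 = true ∧ Yobs ω = false ∧ ω.2.2.2 = z} +
            prob P {ω | ω.2.2.1 = false ∧ Yobs ω = true ∧ ω.2.2.2 = z}))) := by
  rw [prob_split P (fun ω => ω.2.1 = true ∧ ω.1 = false)]
  apply Finset.sum_le_sum
  intro z _
  -- q := P(Y₁=t, Y₀=f, Z=z)
  set q := prob P {ω | (ω.2.1 = true ∧ ω.1 = false) ∧ ω.2.2.2 = z} with hq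
  refine le_min ?_ (le_min ?_ (le_min ?_ ?_))
  · exact prob_mono hP0 (fun ω h => ⟨h.1.1, h.2⟩)
  · exact prob_mono hP0 (fun ω h => ⟨h.1.2, h.2⟩)
  · -- split by X
    have hsplit : ({ω : ZOmega Z | (ω.2.1 = true ∧ ω.1 = false) ∧ ω.2.2.2 = z} : Set (ZOmega Z)) =
        {ω | ((ω.2.1 = true ∧ ω.1 = false) ∧ ω.2.2.2 = z) ∧ ω.2.2.1 = true} ∪
        {ω | ((ω.2.1 = true ∧ ω.1 = false) ∧ ω.2.2.2 = z) ∧ ω.2.2.1 = false} := by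
      ext ω; cases h : ω.2.2.1 <;> simp [h]
    have hdisj : Disjoint
        ({ω : ZOmega Z | ((ω.2.1 = true ∧ ω.1 = false) ∧ ω.2.2.2 = z) ∧ ω.2.2.1 = true})
        ({ω | ((ω.2.1 = true ∧ ω.1 = false) ∧ ω.2.2.2 = z) ∧ ω.2.2.1 = false}) := by
      rw [Set.disjoint_left]; rintro ω ⟨_, h1⟩ ⟨_, h2⟩; simp [h1] at h2
    rw [hq, hsplit, prob_union hdisj]
    gcongr
    · apply prob_mono hP0
      rintro ω ⟨⟨⟨h1, h2⟩, h3⟩, h4⟩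
      exact ⟨h4, by simp [Yobs, h4, h1], h3⟩
    · apply prob_mono hP0
      rintro ω ⟨⟨⟨h1, h2⟩, h3⟩, h4⟩
      exact ⟨h4, by simp [Yobs, h4, h2], h3⟩
  · -- fourth bound
    have e1 : prob P {ω : ZOmega Z | ω.2.1 = true ∧ ω.2.2.2 = z} =
        q + prob P {ω | (ω.2.1 = true ∧ ω.1 = true) ∧ ω.2.2.2 = z} := by
      rw [hq, ← prob_union]
      · congr 1; ext ω; cases h : ω.1 <;> simp [h]
      · rw [Set.disjoint_left]; rintro ω ⟨⟨_, h1⟩, _⟩ ⟨⟨_, h2⟩, _⟩; simp [h1] at h2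
    have e2 : prob P {ω : ZOmega Z | ω.1 = true ∧ ω.2.2.2 = z} =
        prob P {ω | (ω.2.1 = true ∧ ω.1 = true) ∧ ω.2.2.2 = z} +
        prob P {ω | (ω.2.1 = false ∧ ω.1 = true) ∧ ω.2.2.2 = z} := by
      rw [← prob_union]
      · congr 1; ext ω; cases h : ω.2.1 <;> simp [h]
      · rw [Set.disjoint_left]; rintro ω ⟨⟨h1, _⟩, _⟩ ⟨⟨h2, _⟩, _⟩; simp [h1] at h2
    have e3 : prob P {ω : ZOmega Z | (ω.2.1 = false ∧ ω.1 = true) ∧ ω.2.2.2 = z} ≤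
        prob P {ω | ω.2.2.1 = true ∧ Yobs ω = false ∧ ω.2.2.2 = z} +
        prob P {ω | ω.2.2.1 = false ∧ Yobs ω = true ∧ ω.2.2.2 = z} := by
      have hsplit : ({ω : ZOmega Z | (ω.2.1 = false ∧ ω.1 = true) ∧ ω.2.2.2 = z} : Set (ZOmega Z)) =
          {ω | ((ω.2.1 = false ∧ ω.1 = true) ∧ ω.2.2.2 = z) ∧ ω.2.2.1 = true} ∪
          {ω | ((ω.2.1 = false ∧ ω.1 = true) ∧ ω.2.2.2 = z) ∧ ω.2.2.1 = false} := by
        ext ω; cases h : ω.2.2.1 <;> simp [h]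
      have hdisj : Disjoint
          ({ω : ZOmega Z | ((ω.2.1 = false ∧ ω.1 = true) ∧ ω.2.2.2 = z) ∧ ω.2.2.1 = true})
          ({ω | ((ω.2.1 = false ∧ ω.1 = true) ∧ ω.2.2.2 = z) ∧ ω.2.2.1 = false}) := by
        rw [Set.disjoint_left]; rintro ω ⟨_, h1⟩ ⟨_, h2⟩; simp [h1] at h2
      rw [hsplit, prob_union hdisj]
      gcongr
      · apply prob_mono hP0
        rintro ω ⟨⟨⟨h1, h2⟩, h3⟩, h4⟩
        exact ⟨h4, by simp [Yobs, h4, h1], h3⟩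
      · apply prob_mono hP0
        rintro ω ⟨⟨⟨h1, h2⟩, h3⟩, h4⟩
        exact ⟨h4, by simp [Yobs, h4, h2], h3⟩
    linarith
end
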